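/- Let c > 0 and R > 0 satisfy R < c and |β_l − c| < R for all l ∈ {1, …, m}, and define for x > 0: Q(x) = −(∏_{l=1}^m (−β_l)^{n_l} · x^p / (2πi · (|n|+p−1)!)) · ∮_{|t−c|=R} exp(−x·t) · t^{|n|+p−1} · ∏_{l=1}^m (t − β_l)^{−n_l} dt (counterclockwise circle integral). Then for every integer j with 0 ≤ j ≤ |n| − 2 one has ∫_0^∞ x^j · Q(x) dx = 0, and ∫_0^∞ x^{|n|−1} · Q(x) dx = 1. -/

import Mathlib

open MeasureTheory Finset

/-- The multiple Laguerre function of type II (integral representation),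
with contour a counterclockwise circle of center `0` and radius `r`. -/
noncomputable def mlP {m : ℕ} (β : Fin m → ℝ) (p : ℕ) (r : ℝ) (ν : Fin m → ℕ)
    (x : ℝ) : ℂ :=
  (((∑ k, ν k) + p).factorial : ℂ) * (x : ℂ) ^ (-(p : ℤ)) /
      (2 * Real.pi * Complex.I * ∏ k, (-(β k : ℂ)) ^ (ν k)) *
    ∮ s in C((0 : ℂ), r),
      Complex.exp ((x : ℂ) * s) * s ^ (-(∑ k, ν k : ℤ) - (p : ℤ) - 1) *
        ∏ k, (s - (β k : ℂ)) ^ (ν k)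

/-- The multiple Laguerre linear form of type I (integral representation),
with contour a counterclockwise circle of center `c` and radius `R`. -/
noncomputable def mlQ {m : ℕ} (β : Fin m → ℝ) (p : ℕ) (c R : ℝ) (ν : Fin m → ℕ)
    (y : ℝ) : ℂ :=
  -((∏ l, (-(β l : ℂ)) ^ (ν l)) * (y : ℂ) ^ p /
      (2 * Real.pi * Complex.I * (((∑ k, ν k) + p - 1).factorial : ℂ))) *
    ∮ t in C((c : ℂ), R),
      Complex.exp (-((y : ℂ) * t)) * t ^ ((∑ k, ν k) + p - 1) *
        ∏ l, (t - (β l : ℂ)) ^ (-(ν l : ℤ))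

open Set Filter Metric

lemma auxR (a : ℕ) {b : ℝ} (hb : 0 < b) :
    IntegrableOn (fun x : ℝ => x ^ a * Real.exp (-b * x)) (Set.Ioi 0) := by
  have h := integrableOn_rpow_mul_exp_neg_mul_rpow (p := 1) (s := (a : ℝ))
    (lt_of_lt_of_le (by norm_num) (Nat.cast_nonneg a)) zero_lt_one hb
  refine h.congr_fun (fun x hx => ?_) measurableSet_Ioi
  rw [Set.mem_Ioi] at hx
  simp only [Real.rpow_natCast, Real.rpow_one]

lemma auxC (a : ℕ) {t : ℂ} (ht : 0 < t.re) :
    IntegrableOn (fun x : ℝ => (x : ℂ) ^ a * Complex.exp (-(x * t))) (Set.Ioi 0) := by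
  refine Integrable.mono' (auxR a ht) ?_ ?_
  · exact (Continuous.aestronglyMeasurable (by fun_prop))
  · filter_upwards [ae_restrict_mem measurableSet_Ioi] with x hx
    rw [Set.mem_Ioi] at hx
    simp only [norm_mul, norm_pow, Complex.norm_exp]
    simp only [Complex.norm_real, Real.norm_eq_abs, Complex.neg_re, Complex.mul_re,
      Complex.ofReal_re, Complex.ofReal_im]
    rw [abs_of_pos hx]
    apply le_of_eq
    ring_nf

lemma aux_tne {t : ℂ} (ht : 0 < t.re) : t ≠ 0 := by
  intro h; rw [h] at ht; simp at ht

lemma aux_gamma (a : ℕ) {t : ℂ} (ht : 0 < t.re) :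
    ∫ x in Set.Ioi (0 : ℝ), (x : ℂ) ^ a * Complex.exp (-(x * t))
      = (a.factorial : ℂ) / t ^ (a + 1) := by
  have htne : t ≠ 0 := aux_tne ht
  induction a with
  | zero =>
    have hd : ∀ x ∈ Set.Ici (0:ℝ), HasDerivAt (fun x : ℝ => -Complex.exp (-(x * t)) / t)
        (Complex.exp (-(x * t))) x := by
      intro x _
      have h1 : HasDerivAt (fun x : ℝ => -((x : ℂ) * t)) (-t) x := by
        simpa [Pi.neg_def] using ((Complex.ofRealCLM.hasDerivAt (x := x)).mul_const t).neg
      have := ((h1.cexp).neg.div_const t)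
      refine this.congr_deriv ?_
      field_simp
    have htd : Tendsto (fun x : ℝ => -Complex.exp (-(x * t)) / t) atTop (nhds 0) := by
      apply squeeze_zero_norm (a := fun x : ℝ => Real.exp (-t.re * x) / ‖t‖)
      · intro x
        simp only [norm_div, norm_neg, Complex.norm_exp]
        apply le_of_eq; congr 1
        simp [Complex.mul_re]; ring
      · have h2 : Tendsto (fun x : ℝ => -t.re * x) atTop atBot :=
          (tendsto_const_mul_atBot_of_neg (by linarith)).mpr tendsto_id
        simpa using (Real.tendsto_exp_atBot.comp h2).div_const ‖t‖
    have := integral_Ioi_of_hasDerivAt_of_tendsto' hd ((auxC 0 ht).congr_fun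
      (by intro x _; simp) measurableSet_Ioi) htd
    rw [show (∫ x in Set.Ioi (0:ℝ), Complex.exp (-(x * t)))
        = ∫ x in Set.Ioi (0:ℝ), (x:ℂ)^0 * Complex.exp (-(x * t)) by
      apply setIntegral_congr_fun measurableSet_Ioi; intro x _; simp] at this
    rw [this]
    norm_num
    rw [neg_div, neg_neg, one_div]
  | succ a ih =>
    set f : ℝ → ℂ := fun x => -((x:ℂ)^(a+1) * Complex.exp (-(x * t)) / t) with hf
    set f' : ℝ → ℂ := fun x => (x:ℂ)^(a+1) * Complex.exp (-(x * t))
      - (((a:ℂ)+1)/t) * ((x:ℂ)^a * Complex.exp (-(x * t))) with hf'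
    have hd : ∀ x ∈ Set.Ici (0:ℝ), HasDerivAt f (f' x) x := by
      intro x _
      have h0 : HasDerivAt (fun x : ℝ => ((x:ℂ))) 1 x := Complex.ofRealCLM.hasDerivAt
      have h1 : HasDerivAt (fun x : ℝ => (x : ℂ)^(a+1)) (((a:ℂ)+1) * (x:ℂ)^a) x := by
        simpa using (hasDerivAt_pow (a+1) ((x:ℝ):ℂ)).comp_ofReal
      have h2 : HasDerivAt (fun x : ℝ => -((x : ℂ) * t)) (-t) x := by
        simpa [Pi.neg_def] using (h0.mul_const t).neg
      have h3 := ((h1.mul h2.cexp).div_const t).neg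
      have he : f' x = -((((a:ℂ) + 1) * (x:ℂ) ^ a * Complex.exp (-((x:ℂ) * t))
          + (x:ℂ) ^ (a + 1) * (Complex.exp (-((x:ℂ) * t)) * -t)) / t) := by
        simp only [hf']
        field_simp
        ring
      rw [he]
      exact h3
    have htd : Tendsto f atTop (nhds 0) := by
      apply squeeze_zero_norm' (a := fun x : ℝ => (x^(a+1) * Real.exp (-t.re * x)) / ‖t‖)
      · filter_upwards [eventually_ge_atTop (0:ℝ)] with x hx
        simp only [hf, norm_div, norm_neg, norm_mul, norm_pow,
          Complex.norm_exp, Complex.norm_real, Real.norm_eq_abs]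
        apply le_of_eq; congr 2
        · rw [abs_of_nonneg hx]
        · simp [Complex.mul_re]; ring
      · have h4 : Tendsto (fun x : ℝ => x^((a+1:ℕ):ℝ) * Real.exp (-t.re * x)) atTop (nhds 0) :=
          tendsto_rpow_mul_exp_neg_mul_atTop_nhds_zero _ _ ht
        have h5 : Tendsto (fun x : ℝ => x^(a+1) * Real.exp (-t.re * x)) atTop (nhds 0) := by
          apply h4.congr'
          filter_upwards [eventually_gt_atTop (0:ℝ)] with x hx
          rw [Real.rpow_natCast]
        simpa using h5.div_const ‖t‖
    have hint : IntegrableOn f' (Set.Ioi (0:ℝ)) :=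
      (auxC (a+1) ht).sub ((auxC a ht).const_mul _)
    have key := integral_Ioi_of_hasDerivAt_of_tendsto' hd hint htd
    have hsplit : ∫ x in Set.Ioi (0:ℝ), (x:ℂ)^(a+1) * Complex.exp (-(x * t))
        = (∫ x in Set.Ioi (0:ℝ), f' x)
          + (((a:ℂ)+1)/t) * ∫ x in Set.Ioi (0:ℝ), (x:ℂ)^a * Complex.exp (-(x * t)) := by
      rw [← MeasureTheory.integral_const_mul, ← integral_add hint
        (((auxC a ht).const_mul _))]
      apply setIntegral_congr_fun measurableSet_Ioi
      intro x _
      simp only [hf']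
      ring
    rw [hsplit, key, ih]
    have h6 : f 0 = 0 := by simp [hf]
    rw [h6]
    have h7 : t^(a+1) ≠ 0 := pow_ne_zero _ htne
    have h9 : (0:ℂ) - 0 + (((a:ℂ)+1)/t) * ((a.factorial:ℂ)/t^(a+1))
        = (((a:ℂ)+1) * (a.factorial:ℂ))/t^(a+1+1) := by
      rw [pow_succ]
      ring
    rw [h9, Nat.factorial_succ]
    push_cast
    ring

lemma aux_swap (a : ℕ) {c R : ℝ} (hc : 0 < c) (hR : 0 < R) (hRc : R < c)
    {g : ℂ → ℂ} (hg : Continuous fun θ : ℝ => g (circleMap (c:ℂ) R θ)) :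
    (∫ x in Set.Ioi (0:ℝ), (x:ℂ)^a * ∮ t in C((c:ℂ), R), Complex.exp (-(x*t)) * g t) =
      ∮ t in C((c:ℂ), R), ((a.factorial : ℂ) / t^(a+1)) * g t := by
  have h2π : (0:ℝ) ≤ 2 * Real.pi := by positivity
  have hzre : ∀ θ : ℝ, c - R ≤ (circleMap (c:ℂ) R θ).re := by
    intro θ
    have h1 : (circleMap (c:ℂ) R θ).re = c + R * Real.cos θ := by
      simp [circleMap, Complex.add_re, Complex.re_ofReal_mul, Complex.exp_ofReal_mul_I_re]
    rw [h1]
    nlinarith [Real.neg_one_le_cos θ]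
  have hzpos : ∀ θ : ℝ, 0 < (circleMap (c:ℂ) R θ).re := fun θ =>
    lt_of_lt_of_le (by linarith) (hzre θ)
  set H : ℝ → ℝ → ℂ := fun x θ => (x:ℂ)^a * ((circleMap 0 R θ * Complex.I) *
    (Complex.exp (-(x * circleMap (c:ℂ) R θ)) * g (circleMap (c:ℂ) R θ))) with hH
  have hcont : Continuous (Function.uncurry H) := by
    have h1 : Continuous fun pr : ℝ × ℝ => g (circleMap (c:ℂ) R pr.2) :=
      hg.comp continuous_snd
    apply Continuous.mul
    · exact (Complex.continuous_ofReal.comp continuous_fst).pow a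
    · apply Continuous.mul
      · exact ((continuous_circleMap 0 R).comp continuous_snd).mul continuous_const
      · apply Continuous.mul
        · apply Complex.continuous_exp.comp
          exact ((Complex.continuous_ofReal.comp continuous_fst).mul
            ((continuous_circleMap _ R).comp continuous_snd)).neg
        · exact h1
  obtain ⟨M, hM⟩ := (isCompact_Icc (a := (0:ℝ)) (b := 2*Real.pi)).exists_bound_of_continuousOn
    hg.continuousOn
  have hInt : Integrable (Function.uncurry H)
      ((volume.restrict (Set.Ioi 0)).prod (volume.restrict (Set.Ioc 0 (2*Real.pi)))) := by
    refine Integrable.mono'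
      (g := fun pr : ℝ×ℝ => (pr.1^a * Real.exp (-(c-R)*pr.1)) * (R * M))
      ((auxR a (by linarith)).mul_prod (integrable_const _)) hcont.aestronglyMeasurable ?_
    rw [Measure.prod_restrict]
    filter_upwards [ae_restrict_mem (measurableSet_Ioi.prod measurableSet_Ioc)] with pr hpr
    obtain ⟨hx, hθ⟩ := hpr
    rw [Set.mem_Ioi] at hx
    have hb1 : ‖Function.uncurry H pr‖
        = pr.1^a * (R * (Real.exp (-(pr.1 * (circleMap (c:ℂ) R pr.2).re)) *
          ‖g (circleMap (c:ℂ) R pr.2)‖)) := by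
      simp only [Function.uncurry, hH, norm_mul, norm_pow,
        Complex.norm_real, Real.norm_eq_abs, Complex.norm_exp, Complex.norm_I, norm_circleMap_zero, mul_one,
        abs_of_pos hx, abs_of_pos hR]
      congr 3
      simp [Complex.neg_re, Complex.mul_re]
    rw [hb1]
    have hgM : ‖g (circleMap (c:ℂ) R pr.2)‖ ≤ M := hM pr.2 ⟨hθ.1.le, hθ.2⟩
    have hexp : Real.exp (-(pr.1 * (circleMap (c:ℂ) R pr.2).re)) ≤ Real.exp (-(c-R)*pr.1) := by
      apply Real.exp_le_exp.mpr
      nlinarith [hzre pr.2]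
    calc pr.1^a * (R * (Real.exp (-(pr.1 * (circleMap (c:ℂ) R pr.2).re)) *
          ‖g (circleMap (c:ℂ) R pr.2)‖))
        ≤ pr.1^a * (R * (Real.exp (-(c-R)*pr.1) * M)) := by
          gcongr
      _ = pr.1^a * Real.exp (-(c-R)*pr.1) * (R * M) := by ring
  simp only [circleIntegral, deriv_circleMap, smul_eq_mul,
    intervalIntegral.integral_of_le h2π]
  have step1 : (∫ x in Set.Ioi (0:ℝ), (x:ℂ)^a * ∫ θ in Set.Ioc 0 (2*Real.pi),
        circleMap 0 R θ * Complex.I *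
          (Complex.exp (-(x * circleMap (c:ℂ) R θ)) * g (circleMap (c:ℂ) R θ)))
      = ∫ x in Set.Ioi (0:ℝ), ∫ θ in Set.Ioc 0 (2*Real.pi), H x θ := by
    apply setIntegral_congr_fun measurableSet_Ioi
    intro x _
    exact (integral_const_mul _ _).symm
  rw [step1, integral_integral_swap hInt]
  apply setIntegral_congr_fun measurableSet_Ioc
  intro θ _
  have h3 : ∀ x : ℝ, H x θ = ((x:ℂ)^a * Complex.exp (-(x * circleMap (c:ℂ) R θ))) *
      ((circleMap 0 R θ * Complex.I) * g (circleMap (c:ℂ) R θ)) := by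
    intro x; simp only [hH]; ring
  calc (∫ x in Set.Ioi (0:ℝ), H x θ)
      = (∫ x in Set.Ioi (0:ℝ), ((x:ℂ)^a * Complex.exp (-(x * circleMap (c:ℂ) R θ)))) *
        ((circleMap 0 R θ * Complex.I) * g (circleMap (c:ℂ) R θ)) := by
        rw [← integral_mul_const]
        exact setIntegral_congr_fun measurableSet_Ioi fun x _ => h3 x
    _ = circleMap 0 R θ * Complex.I *
        ((a.factorial : ℂ) / (circleMap (c:ℂ) R θ)^(a+1) * g (circleMap (c:ℂ) R θ)) := by
        rw [aux_gamma a (hzpos θ)]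
        ring

lemma aux_hdiff {m : ℕ} (β : Fin m → ℝ) (n : Fin m → ℕ) {t : ℂ}
    (ht : ∀ l, t ≠ (β l : ℂ)) :
    DifferentiableAt ℂ (fun t : ℂ => ∏ l, (t - (β l : ℂ)) ^ (-(n l : ℤ))) t := by
  apply DifferentiableAt.fun_finsetProd
  intro l _
  exact (differentiableAt_id.sub_const _).zpow (Or.inl (sub_ne_zero.mpr (ht l)))

lemma aux_ball {m : ℕ} {β : Fin m → ℝ} {c R : ℝ} (hβc : ∀ l, |β l - c| < R) (l : Fin m) :
    ((β l : ℂ)) ∈ Metric.ball (c : ℂ) R := by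
  rw [Metric.mem_ball, Complex.dist_eq, ← Complex.ofReal_sub, Complex.norm_real, Real.norm_eq_abs]
  exact hβc l

lemma aux_hbound {m : ℕ} (β : Fin m → ℝ) (n : Fin m → ℕ) {c R ρ : ℝ} (hR : 0 < R)
    (hRρ : R < ρ) (hβc : ∀ l, |β l - c| < R) {t : ℂ} (ht : t ∈ Metric.sphere (c : ℂ) ρ) :
    ‖∏ l, (t - (β l : ℂ)) ^ (-(n l : ℤ))‖ ≤ ((ρ - R) ^ (∑ k, n k))⁻¹ := by
  have h1 : ‖t - (c : ℂ)‖ = ρ := by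
    rw [mem_sphere_iff_norm] at ht; exact ht
  have key : ∀ l, ρ - R ≤ ‖t - (β l : ℂ)‖ := by
    intro l
    have h2 : ‖(β l : ℂ) - (c : ℂ)‖ < R := by
      rw [← Complex.ofReal_sub, Complex.norm_real, Real.norm_eq_abs]
      exact hβc l
    have h3 := norm_sub_norm_le (t - (c : ℂ)) ((β l : ℂ) - c)
    rw [show (t - (c:ℂ)) - ((β l : ℂ) - c) = t - β l by ring, h1] at h3
    linarith
  have hpos : (0:ℝ) < ρ - R := by linarith
  calc ‖∏ l, (t - (β l : ℂ)) ^ (-(n l : ℤ))‖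
      = (∏ l, ‖t - (β l : ℂ)‖ ^ (n l))⁻¹ := by
        rw [norm_prod, ← Finset.prod_inv_distrib]
        congr 1; ext l
        rw [norm_zpow, zpow_neg, zpow_natCast]
    _ ≤ ((ρ - R) ^ (∑ k, n k))⁻¹ := by
        apply inv_anti₀ (by positivity)
        rw [← Finset.prod_pow_eq_pow_sum]
        apply Finset.prod_le_prod
        · intro l _; positivity
        · intro l _; exact pow_le_pow_left₀ hpos.le (key l) _

lemma aux_contour_zero {m : ℕ} (β : Fin m → ℝ) (n : Fin m → ℕ) {c R : ℝ} (hc : 0 < c)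
    (hR : 0 < R) (hRc : R < c) (hβc : ∀ l, |β l - c| < R) (d : ℕ) (hd : d + 2 ≤ ∑ k, n k) :
    (∮ t in C((c : ℂ), R), t ^ d * ∏ l, (t - (β l : ℂ)) ^ (-(n l : ℤ))) = 0 := by
  set N := ∑ k, n k with hN
  set f : ℂ → ℂ := fun t => t ^ d * ∏ l, (t - (β l : ℂ)) ^ (-(n l : ℤ)) with hf
  have hfd : ∀ t : ℂ, (∀ l, t ≠ (β l : ℂ)) → DifferentiableAt ℂ f t := by
    intro t ht
    exact (differentiableAt_pow d).mul (aux_hdiff β n ht)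
  have hnotin : ∀ ρ : ℝ, ∀ t : ℂ, t ∉ Metric.ball (c:ℂ) R → ∀ l, t ≠ (β l : ℂ) := by
    intro ρ t ht l he
    exact ht (he ▸ aux_ball hβc l)
  have heq : ∀ ρ : ℝ, R ≤ ρ → (∮ t in C((c:ℂ), ρ), f t) = ∮ t in C((c:ℂ), R), f t := by
    intro ρ hρ
    apply Complex.circleIntegral_eq_of_differentiable_on_annulus_off_countable hR hρ
      Set.countable_empty
    · intro t ht
      exact ((hfd t (hnotin ρ t ht.2)).continuousAt).continuousWithinAt
    · intro t ht
      exact hfd t (hnotin ρ t (fun hb => ht.1.2 (Metric.ball_subset_closedBall hb)))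
  set ρ₀ : ℝ := 2*(R + c) + 2 with hρ₀
  have hbnd : ∀ ρ : ℝ, ρ₀ ≤ ρ →
      ‖∮ t in C((c:ℂ), R), f t‖ ≤ (2*Real.pi) * (2^d * 2^(d+2)) / ρ := by
    intro ρ hρ
    have hρ1 : (1:ℝ) ≤ ρ/2 := by simp only [hρ₀] at hρ; linarith
    have hρpos : (0:ℝ) < ρ := by linarith
    have hRρ : R < ρ := by simp only [hρ₀] at hρ; linarith
    have hcρ : c < ρ := by simp only [hρ₀] at hρ; linarith
    have hhalf : ρ/2 ≤ ρ - R := by simp only [hρ₀] at hρ; linarith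
    rw [← heq ρ hRρ.le]
    have hsb : ∀ t ∈ Metric.sphere (c:ℂ) ρ, ‖f t‖ ≤ (2*ρ)^d * ((ρ/2)^(d+2))⁻¹ := by
      intro t ht
      have hb1 : ‖∏ l, (t - (β l : ℂ)) ^ (-(n l : ℤ))‖ ≤ ((ρ - R)^N)⁻¹ :=
        aux_hbound β n hR hRρ hβc ht
      have hb2 : ((ρ - R)^N)⁻¹ ≤ ((ρ/2)^(d+2))⁻¹ := by
        apply inv_anti₀ (by positivity)
        calc (ρ/2)^(d+2) ≤ (ρ/2)^N := pow_le_pow_right₀ hρ1 hd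
          _ ≤ (ρ - R)^N := pow_le_pow_left₀ (by linarith) hhalf _
      have hb3 : ‖(t:ℂ)^d‖ ≤ (2*ρ)^d := by
        rw [norm_pow]
        apply pow_le_pow_left₀ (norm_nonneg _)
        have h4 : ‖t - (c:ℂ)‖ = ρ := by rw [mem_sphere_iff_norm] at ht; exact ht
        calc ‖t‖ = ‖(t - c) + (c:ℂ)‖ := by ring_nf
          _ ≤ ‖t - (c:ℂ)‖ + ‖(c:ℂ)‖ := norm_add_le _ _
          _ ≤ ρ + c := by rw [h4]; simp [abs_of_pos hc]
          _ ≤ 2*ρ := by linarith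
      calc ‖f t‖ = ‖(t:ℂ)^d‖ * ‖∏ l, (t - (β l : ℂ)) ^ (-(n l : ℤ))‖ := norm_mul _ _
        _ ≤ (2*ρ)^d * ((ρ/2)^(d+2))⁻¹ := by
            apply mul_le_mul hb3 (hb1.trans hb2) (norm_nonneg _) (by positivity)
    calc ‖∮ t in C((c:ℂ), ρ), f t‖ ≤ 2 * Real.pi * ρ * ((2*ρ)^d * ((ρ/2)^(d+2))⁻¹) :=
          circleIntegral.norm_integral_le_of_norm_le_const hρpos.le hsb
      _ = (2*Real.pi) * (2^d * 2^(d+2)) / ρ := by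
          rw [div_pow, mul_pow]
          field_simp
          ring
  have htend : Filter.Tendsto (fun ρ : ℝ => (2*Real.pi) * (2^d * 2^(d+2)) / ρ)
      Filter.atTop (nhds 0) := by
    simpa [div_eq_mul_inv] using tendsto_inv_atTop_zero.const_mul ((2*Real.pi) * (2^d * 2^(d+2) : ℝ))
  have hle : ‖∮ t in C((c:ℂ), R), f t‖ ≤ 0 := by
    apply ge_of_tendsto htend
    filter_upwards [Filter.eventually_ge_atTop ρ₀] with ρ hρ
    exact hbnd ρ hρ
  simpa using norm_le_zero_iff.mp hle

lemma aux_contour_main {m : ℕ} (β : Fin m → ℝ) (hβpos : ∀ k, 0 < β k) (n : Fin m → ℕ)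
    {c R : ℝ} (hc : 0 < c) (hR : 0 < R) (hRc : R < c) (hβc : ∀ l, |β l - c| < R)
    (hm : 1 ≤ ∑ k, n k) :
    (∮ t in C((c : ℂ), R), t⁻¹ * ∏ l, (t - (β l : ℂ)) ^ (-(n l : ℤ)))
      = -(2 * Real.pi * Complex.I) * ∏ l, ((0:ℂ) - (β l : ℂ)) ^ (-(n l : ℤ)) := by
  set N := ∑ k, n k with hN
  set h : ℂ → ℂ := fun t => ∏ l, (t - (β l : ℂ)) ^ (-(n l : ℤ)) with hh
  set f : ℂ → ℂ := fun t => t⁻¹ * h t with hf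
  have hne0 : ∀ l, (0:ℂ) ≠ (β l : ℂ) := by
    intro l he
    have := hβpos l
    rw [← Complex.ofReal_zero] at he
    exact absurd (Complex.ofReal_inj.mp he).symm (ne_of_gt this)
  have h0d : DifferentiableAt ℂ h 0 := aux_hdiff β n hne0
  have hnotin : ∀ t : ℂ, t ∉ Metric.ball (c:ℂ) R → ∀ l, t ≠ (β l : ℂ) := by
    intro t ht l he
    exact ht (he ▸ aux_ball hβc l)
  set k : ℂ → ℂ := dslope h 0 with hk
  -- facts about points on spheres
  have hzero_not_sphere : ∀ ρ : ℝ, c < ρ ∨ ρ < c → ∀ t : ℂ, t ∈ Metric.sphere (c:ℂ) ρ → t ≠ 0 := by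
    intro ρ hρ t ht he
    rw [mem_sphere_iff_norm, he] at ht
    have : ‖(0:ℂ) - (c:ℂ)‖ = c := by
      simp [abs_of_pos hc]
    rw [this] at ht
    rcases hρ with h1 | h1 <;> linarith
  have hkne : ∀ t : ℂ, t ≠ 0 → (∀ l, t ≠ (β l:ℂ)) → DifferentiableAt ℂ k t := by
    intro t ht hl
    exact (differentiableAt_dslope_of_ne ht).mpr (aux_hdiff β n hl)
  have hkeq : ∀ t : ℂ, t ≠ 0 → k t = t⁻¹ * h t - h 0 * t⁻¹ := by
    intro t ht
    rw [hk, dslope_of_ne h ht, slope_def_field]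
    field_simp
    rw [sub_zero]
  -- value on circle C(c,R): f = k there (mod the h0/t part integrating to zero)
  have hsphR : ∀ t ∈ Metric.sphere (c:ℂ) R, t ≠ 0 := hzero_not_sphere R (Or.inr hRc)
  have hfcontR : ContinuousOn f (Metric.sphere (c:ℂ) R) := by
    intro t ht
    have h1 : t ≠ 0 := hsphR t ht
    have h2 : ∀ l, t ≠ (β l:ℂ) := by
      intro l
      apply hnotin t
      rw [Metric.mem_sphere] at ht
      simp [Metric.mem_ball, ht]
    exact (((differentiableAt_inv h1).mul (aux_hdiff β n h2)).continuousAt).continuousWithinAt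
  have hkcontR : ∀ ρ : ℝ, R ≤ ρ → ContinuousOn k (Metric.sphere (c:ℂ) ρ) := by
    intro ρ hρ t ht
    rw [Metric.mem_sphere] at ht
    by_cases h1 : t = 0
    · subst h1
      exact (continuousAt_dslope_same.mpr h0d).continuousWithinAt
    · have h2 : ∀ l, t ≠ (β l:ℂ) := by
        intro l
        apply hnotin t
        rw [Metric.mem_ball, ht]
        linarith
      exact ((hkne t h1 h2).continuousAt).continuousWithinAt
  -- Step C : on C(c,R), ∮ f - ∮ k = 0
  have stepC : (∮ t in C((c:ℂ), R), f t) = ∮ t in C((c:ℂ), R), k t := by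
    have hint1 : CircleIntegrable f (c:ℂ) R := hfcontR.circleIntegrable hR.le
    have hint2 : CircleIntegrable k (c:ℂ) R := (hkcontR R le_rfl).circleIntegrable hR.le
    have hsub := circleIntegral.integral_sub hint1 hint2
    have hcongr : (∮ t in C((c:ℂ), R), (f t - k t)) = ∮ t in C((c:ℂ), R), h 0 * t⁻¹ := by
      apply circleIntegral.integral_congr hR.le
      intro t ht
      have h1 : t ≠ 0 := hsphR t ht
      simp only [hkeq t h1]
      ring
    have hzero : (∮ t in C((c:ℂ), R), h 0 * t⁻¹) = 0 := by
      apply Complex.circleIntegral_eq_zero_of_differentiable_on_off_countable hR.le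
        Set.countable_empty
      · intro t ht
        have h1 : t ≠ 0 := by
          intro he
          rw [he, Metric.mem_closedBall, Complex.dist_eq] at ht
          have h2 : ‖(0:ℂ) - (c:ℂ)‖ = c := by simp [abs_of_pos hc]
          rw [h2] at ht
          linarith
        have h3 : DifferentiableAt ℂ (fun t : ℂ => t⁻¹) t := differentiableAt_inv h1
        exact ((h3.const_mul (h 0)).continuousAt).continuousWithinAt
      · intro t ht
        have ht1 := ht.1
        have h1 : t ≠ 0 := by
          intro he
          rw [he, Metric.mem_ball, Complex.dist_eq] at ht1
          have h2 : ‖(0:ℂ) - (c:ℂ)‖ = c := by simp [abs_of_pos hc]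
          rw [h2] at ht1
          linarith
        have h3 : DifferentiableAt ℂ (fun t : ℂ => t⁻¹) t := differentiableAt_inv h1
        exact h3.const_mul (h 0)
    exact sub_eq_zero.mp (hsub.symm.trans (hcongr.trans hzero))
  -- continue
  have stepD : ∀ ρ : ℝ, R ≤ ρ → (∮ t in C((c:ℂ), ρ), k t) = ∮ t in C((c:ℂ), R), k t := by
    intro ρ hρ
    apply Complex.circleIntegral_eq_of_differentiable_on_annulus_off_countable hR hρ
      (Set.countable_singleton 0)
    · intro t ht
      by_cases h1 : t = 0
      · subst h1
        exact (continuousAt_dslope_same.mpr h0d).continuousWithinAt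
      · exact ((hkne t h1 (hnotin t ht.2)).continuousAt).continuousWithinAt
    · intro t ht
      exact hkne t (by simpa using ht.2)
        (hnotin t (fun hb => ht.1.2 (Metric.ball_subset_closedBall hb)))
  set ρ₀ : ℝ := 2*(R + c) + 2 with hρ₀
  have stepE : ∀ ρ : ℝ, ρ₀ ≤ ρ → (∮ t in C((c:ℂ), ρ), k t)
      = (∮ t in C((c:ℂ), ρ), f t) - h 0 * (2 * Real.pi * Complex.I) := by
    intro ρ hρ
    have hcρ : c < ρ := by simp only [hρ₀] at hρ; linarith
    have hRρ : R < ρ := by simp only [hρ₀] at hρ; linarith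
    have hρpos : (0:ℝ) < ρ := by linarith
    have hsph : ∀ t ∈ Metric.sphere (c:ℂ) ρ, t ≠ 0 := hzero_not_sphere ρ (Or.inl hcρ)
    have hfcont : ContinuousOn f (Metric.sphere (c:ℂ) ρ) := by
      intro t ht
      have h1 := hsph t ht
      have h2 : ∀ l, t ≠ (β l:ℂ) := by
        apply hnotin
        rw [Metric.mem_sphere] at ht
        rw [Metric.mem_ball, ht]
        exact not_lt.mpr hRρ.le
      have h3 : DifferentiableAt ℂ (fun t : ℂ => t⁻¹) t := differentiableAt_inv h1
      exact ((h3.mul (aux_hdiff β n h2)).continuousAt).continuousWithinAt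
    have hint1 : CircleIntegrable f (c:ℂ) ρ := hfcont.circleIntegrable hρpos.le
    have hint2 : CircleIntegrable k (c:ℂ) ρ := (hkcontR ρ hRρ.le).circleIntegrable hρpos.le
    have hsub := circleIntegral.integral_sub hint1 hint2
    have hcongr : (∮ t in C((c:ℂ), ρ), (f t - k t))
        = ∮ t in C((c:ℂ), ρ), h 0 * (t - 0)⁻¹ := by
      apply circleIntegral.integral_congr hρpos.le
      intro t ht
      simp only [hkeq t (hsph t ht), sub_zero]
      ring
    have hval : (∮ t in C((c:ℂ), ρ), h 0 * (t - 0)⁻¹) = h 0 * (2 * Real.pi * Complex.I) := by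
      have hsm : (∮ t in C((c:ℂ), ρ), h 0 * (t - 0)⁻¹)
          = h 0 • ∮ t in C((c:ℂ), ρ), (t - 0)⁻¹ := by
        rw [← circleIntegral.integral_smul]
        simp [smul_eq_mul]
      rw [hsm, circleIntegral.integral_sub_inv_of_mem_ball]
      · simp [smul_eq_mul]
      · rw [Metric.mem_ball, Complex.dist_eq]
        have : ‖(0:ℂ) - c‖ = c := by simp [abs_of_pos hc]
        rw [this]
        exact hcρ
    have h5 : (∮ t in C((c:ℂ), ρ), f t) - (∮ t in C((c:ℂ), ρ), k t)
        = h 0 * (2 * Real.pi * Complex.I) := hsub.symm.trans (hcongr.trans hval)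
    linear_combination -h5
  have hbnd : ∀ ρ : ℝ, ρ₀ ≤ ρ →
      ‖∮ t in C((c:ℂ), ρ), f t‖ ≤ (8*Real.pi) / ρ := by
    intro ρ hρ
    have hρ1 : (1:ℝ) ≤ ρ/2 := by simp only [hρ₀] at hρ; linarith
    have hρpos : (0:ℝ) < ρ := by linarith
    have hRρ : R < ρ := by simp only [hρ₀] at hρ; linarith
    have hcρ : c < ρ := by simp only [hρ₀] at hρ; linarith
    have hhalfR : ρ/2 ≤ ρ - R := by simp only [hρ₀] at hρ; linarith
    have hhalfc : ρ/2 ≤ ρ - c := by simp only [hρ₀] at hρ; linarith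
    have hb0 : ∀ t ∈ Metric.sphere (c:ℂ) ρ, ‖f t‖ ≤ (ρ/2)⁻¹ * ((ρ/2)^N)⁻¹ := by
      intro t ht
      have h4 : ‖t - (c:ℂ)‖ = ρ := by rw [mem_sphere_iff_norm] at ht; exact ht
      have htn : ρ - c ≤ ‖t‖ := by
        have h6 : ‖t - (c:ℂ)‖ ≤ ‖t‖ + ‖(c:ℂ)‖ := norm_sub_le _ _
        rw [h4] at h6
        have h7 : ‖(c:ℂ)‖ = c := by simp [abs_of_pos hc]
        rw [h7] at h6
        linarith
      have hb1 : ‖t⁻¹‖ ≤ (ρ/2)⁻¹ := by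
        rw [norm_inv]
        exact inv_anti₀ (by linarith) (le_trans hhalfc htn)
      have hb2 : ‖∏ l, (t - (β l : ℂ)) ^ (-(n l : ℤ))‖ ≤ ((ρ/2)^N)⁻¹ :=
        (aux_hbound β n hR hRρ hβc ht).trans
          (inv_anti₀ (by positivity) (pow_le_pow_left₀ (by linarith) hhalfR _))
      calc ‖f t‖ = ‖t⁻¹‖ * ‖∏ l, (t - (β l : ℂ)) ^ (-(n l : ℤ))‖ := norm_mul _ _
        _ ≤ (ρ/2)⁻¹ * ((ρ/2)^N)⁻¹ :=
            mul_le_mul hb1 hb2 (norm_nonneg _) (by positivity)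
    calc ‖∮ t in C((c:ℂ), ρ), f t‖ ≤ 2 * Real.pi * ρ * ((ρ/2)⁻¹ * ((ρ/2)^N)⁻¹) :=
          circleIntegral.norm_integral_le_of_norm_le_const hρpos.le hb0
      _ ≤ 2 * Real.pi * ρ * ((ρ/2)⁻¹ * (ρ/2)⁻¹) := by
          gcongr
          exact le_self_pow₀ hρ1 (by omega)
      _ = (8*Real.pi) / ρ := by
          field_simp
          ring
  have final : ∀ ρ : ℝ, ρ₀ ≤ ρ →
      ‖(∮ t in C((c:ℂ), R), f t) + h 0 * (2 * Real.pi * Complex.I)‖ ≤ (8*Real.pi) / ρ := by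
    intro ρ hρ
    have hRρ : R ≤ ρ := by simp only [hρ₀] at hρ; linarith
    have e : (∮ t in C((c:ℂ), R), f t) + h 0 * (2 * Real.pi * Complex.I)
        = ∮ t in C((c:ℂ), ρ), f t := by
      rw [stepC, ← stepD ρ hRρ, stepE ρ hρ]
      ring
    rw [e]
    exact hbnd ρ hρ
  have htend : Filter.Tendsto (fun ρ : ℝ => (8*Real.pi) / ρ) Filter.atTop (nhds 0) := by
    simpa [div_eq_mul_inv] using tendsto_inv_atTop_zero.const_mul (8*Real.pi)
  have hle : ‖(∮ t in C((c:ℂ), R), f t) + h 0 * (2 * Real.pi * Complex.I)‖ ≤ 0 := by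
    apply ge_of_tendsto htend
    filter_upwards [Filter.eventually_ge_atTop ρ₀] with ρ hρ
    exact final ρ hρ
  have hzero : (∮ t in C((c:ℂ), R), f t) + h 0 * (2 * Real.pi * Complex.I) = 0 :=
    norm_le_zero_iff.mp hle
  have h0eq : h 0 = ∏ l, ((0:ℂ) - (β l : ℂ)) ^ (-(n l : ℤ)) := rfl
  have hgoal : (∮ t in C((c : ℂ), R), t⁻¹ * ∏ l, (t - (β l : ℂ)) ^ (-(n l : ℤ)))
      = ∮ t in C((c:ℂ), R), f t := rfl
  rw [hgoal, ← h0eq]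
  linear_combination hzero

theorem stmt_15 (m : ℕ) (hm : 1 ≤ m) (β : Fin m → ℝ) (hβpos : ∀ k, 0 < β k)
    (hβ : Function.Injective β) (n : Fin m → ℕ) (hn : ∀ k, 1 ≤ n k) (p : ℕ)
    (c R : ℝ) (hc : 0 < c) (hR : 0 < R) (hRc : R < c) (hβc : ∀ l, |β l - c| < R) :
    (∀ j : ℕ, j + 2 ≤ ∑ k, n k →
      ∫ x in Set.Ioi (0 : ℝ), (x : ℂ) ^ j * mlQ β p c R n x = 0) ∧
    ∫ x in Set.Ioi (0 : ℝ), (x : ℂ) ^ ((∑ k, n k) - 1) * mlQ β p c R n x = 1 := by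

  have hN1 : 1 ≤ ∑ k, n k := by
    calc (1:ℕ) ≤ m := hm
      _ = ∑ _k : Fin m, 1 := by simp
      _ ≤ ∑ k, n k := Finset.sum_le_sum (fun k _ => hn k)
  set N := ∑ k, n k with hN
  set q : ℕ := N + p - 1 with hq
  have hq1 : q + 1 = N + p := by omega
  set P : ℂ := ∏ l, (-(β l : ℂ)) ^ (n l) with hP
  have hPne : P ≠ 0 := by
    rw [hP]
    apply Finset.prod_ne_zero_iff.mpr
    intro l _
    exact pow_ne_zero _ (neg_ne_zero.mpr (Complex.ofReal_ne_zero.mpr (hβpos l).ne'))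
  have hsphne : ∀ θ : ℝ, ∀ l, circleMap (c:ℂ) R θ ≠ (β l : ℂ) := by
    intro θ l he
    have h1 : dist (circleMap (c:ℂ) R θ) (c:ℂ) = R := by
      have h0 := circleMap_mem_sphere (c:ℂ) hR.le θ
      rwa [Metric.mem_sphere] at h0
    rw [he] at h1
    have h2 := aux_ball hβc l
    rw [Metric.mem_ball, h1] at h2
    exact lt_irrefl _ h2
  have hgcont : Continuous fun θ : ℝ =>
      (circleMap (c:ℂ) R θ) ^ q * ∏ l, (circleMap (c:ℂ) R θ - (β l : ℂ)) ^ (-(n l : ℤ)) := by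
    apply Continuous.mul
    · exact (continuous_circleMap _ _).pow q
    · apply continuous_finset_prod
      intro l _
      apply ContinuousOn.comp_continuous (g := fun z : ℂ => (z - (β l:ℂ)) ^ (-(n l : ℤ)))
        (s := {z : ℂ | z ≠ (β l:ℂ)}) ?_ (continuous_circleMap _ _) ?_
      · intro z hz
        exact ((((differentiableAt_id.sub_const _).zpow
          (Or.inl (sub_ne_zero.mpr hz)) : DifferentiableAt ℂ (fun z : ℂ => (z - (β l:ℂ)) ^ (-(n l : ℤ))) z)).continuousAt).continuousWithinAt
      · intro θ; exact hsphne θ l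
  have key : ∀ j : ℕ, ∫ x in Set.Ioi (0 : ℝ), (x : ℂ) ^ j * mlQ β p c R n x
      = -(P / (2 * Real.pi * Complex.I * (q.factorial : ℂ))) *
        ∮ t in C((c:ℂ), R), (((j+p).factorial : ℂ) / t ^ (j+p+1)) *
          (t ^ q * ∏ l, (t - (β l : ℂ)) ^ (-(n l : ℤ))) := by
    intro j
    have e1 : ∀ x : ℝ, x ∈ Set.Ioi (0:ℝ) → (x : ℂ) ^ j * mlQ β p c R n x
        = -(P / (2 * Real.pi * Complex.I * (q.factorial : ℂ))) *
          ((x:ℂ)^(j+p) * ∮ t in C((c:ℂ), R), Complex.exp (-((x:ℂ)*t)) *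
            (t ^ q * ∏ l, (t - (β l : ℂ)) ^ (-(n l : ℤ)))) := by
      intro x _
      simp only [mlQ, ← hN, ← hq, ← hP]
      have e2 : (∮ t in C((c:ℂ),R), Complex.exp (-((x:ℂ) * t)) * t ^ q *
            ∏ l, (t - (β l:ℂ)) ^ (-(n l : ℤ)))
          = ∮ t in C((c:ℂ),R), Complex.exp (-((x:ℂ)*t)) *
            (t^q * ∏ l, (t - (β l:ℂ)) ^ (-(n l:ℤ))) := by
        simp only [mul_assoc]
      rw [e2, pow_add]
      ring
    rw [setIntegral_congr_fun measurableSet_Ioi e1, integral_const_mul,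
      aux_swap (j+p) hc hR hRc hgcont]
  constructor
  · intro j hj
    rw [key j]
    set d : ℕ := q - (j + p + 1) with hd
    have hqd : q = (j + p + 1) + d := by omega
    have e3 : (∮ t in C((c:ℂ), R), (((j+p).factorial : ℂ) / t ^ (j+p+1)) *
          (t ^ q * ∏ l, (t - (β l : ℂ)) ^ (-(n l : ℤ))))
        = ∮ t in C((c:ℂ), R), ((j+p).factorial : ℂ) •
          (t ^ d * ∏ l, (t - (β l : ℂ)) ^ (-(n l : ℤ))) := by
      apply circleIntegral.integral_congr hR.le
      intro t ht
      have ht0 : t ≠ 0 := by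
        intro he
        rw [mem_sphere_iff_norm, he] at ht
        have : ‖(0:ℂ) - (c:ℂ)‖ = c := by simp [abs_of_pos hc]
        rw [this] at ht
        linarith
      have htp : t ^ (j+p+1) ≠ 0 := pow_ne_zero _ ht0
      simp only [smul_eq_mul]
      rw [div_mul_eq_mul_div, div_eq_iff htp, hqd, pow_add]
      ring
    rw [e3, circleIntegral.integral_smul, aux_contour_zero β n hc hR hRc hβc d (by omega)]
    simp
  · rw [key (N-1)]
    have e4 : (N - 1) + p = q := by omega
    rw [e4]
    have e6 : (∮ t in C((c:ℂ), R), ((q.factorial : ℂ) / t ^ (q+1)) *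
          (t ^ q * ∏ l, (t - (β l : ℂ)) ^ (-(n l : ℤ))))
        = ∮ t in C((c:ℂ), R), (q.factorial : ℂ) •
          (t⁻¹ * ∏ l, (t - (β l : ℂ)) ^ (-(n l : ℤ))) := by
      apply circleIntegral.integral_congr hR.le
      intro t ht
      have ht0 : t ≠ 0 := by
        intro he
        rw [mem_sphere_iff_norm, he] at ht
        have : ‖(0:ℂ) - (c:ℂ)‖ = c := by simp [abs_of_pos hc]
        rw [this] at ht
        linarith
      have htp : t ^ q ≠ 0 := pow_ne_zero _ ht0
      have hti : t⁻¹ * t = 1 := inv_mul_cancel₀ ht0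
      simp only [smul_eq_mul]
      rw [div_mul_eq_mul_div, div_eq_iff (pow_ne_zero (q+1) ht0), pow_succ]
      linear_combination (-(q.factorial : ℂ) * (∏ l, (t - (β l:ℂ)) ^ (-(n l : ℤ))) * t ^ q) * hti
    rw [e6, circleIntegral.integral_smul,
      aux_contour_main β hβpos n hc hR hRc hβc hN1]
    have e7 : (∏ l, ((0:ℂ) - (β l : ℂ)) ^ (-(n l : ℤ))) = P⁻¹ := by
      rw [hP, ← Finset.prod_inv_distrib]
      congr 1; ext l
      rw [zero_sub, zpow_neg, zpow_natCast]
    rw [e7, smul_eq_mul]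
    have hfac : ((q.factorial : ℂ)) ≠ 0 := by
      exact_mod_cast Nat.cast_ne_zero.mpr q.factorial_ne_zero
    have hpi : (Real.pi : ℂ) ≠ 0 := Complex.ofReal_ne_zero.mpr Real.pi_ne_zero
    field_simp
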